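/- arXiv:1905.03682 — 2 statements merged into one kernel-verified Lean document; each statement's English description precedes it below -/
import Mathlib

section
/- Let h be an N×N real matrix with nonnegative entries, let i, j be indices, let d ≥ 1 be an integer such that (h^n)_{ij} = 0 for all 0 ≤ n < d, and suppose every eigenvalue of h has absolute value at most h_max > 0. If h is symmetric, then for every real α > 1 and t ≥ 0, (exp(t h))_{ij} ≤ (e^{α h_max t} − 1) · α^{−d}. -/
open Matrix
open scoped Nat

lemma aux_pow_entry_nonneg {N : ℕ} (h : Matrix (Fin N) (Fin N) ℝ)
    (hpos : ∀ i j, 0 ≤ h i j) (n : ℕ) (a b : Fin N) : 0 ≤ (h ^ n) a b := by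
  induction n generalizing a b with
  | zero => simp [Matrix.one_apply]; positivity
  | succ n ih =>
    rw [pow_succ, Matrix.mul_apply]
    exact Finset.sum_nonneg fun k _ => mul_nonneg (ih a k) (hpos k b)

lemma aux_conj_pow {M : Type*} [Ring M] (U D V : M) (hUV : U * V = 1) (hVU : V * U = 1)
    (n : ℕ) : U * D ^ n * V = (U * D * V) ^ n := by
  induction n with
  | zero => simpa using hUV
  | succ n ih =>
    have key : (U * D ^ n * V) * (U * D * V) = U * D ^ n * (V * U) * (D * V) := by
      noncomm_ring
    have key2 : U * D ^ n * 1 * (D * V) = U * D ^ (n + 1) * V := by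
      rw [pow_succ]; noncomm_ring
    rw [pow_succ (U * D * V) n, ← ih, key, hVU, key2]

lemma aux_pow_spectral {N : ℕ} (h : Matrix (Fin N) (Fin N) ℝ)
    (hA : h.IsHermitian) (n : ℕ) :
    h ^ n = (hA.eigenvectorUnitary : Matrix (Fin N) (Fin N) ℝ)
      * (Matrix.diagonal (RCLike.ofReal ∘ hA.eigenvalues)) ^ n
      * star (hA.eigenvectorUnitary : Matrix (Fin N) (Fin N) ℝ) := by
  have hU1 : (hA.eigenvectorUnitary : Matrix (Fin N) (Fin N) ℝ)
      * star (hA.eigenvectorUnitary : Matrix (Fin N) (Fin N) ℝ) = 1 :=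
    (Matrix.mem_unitaryGroup_iff).mp hA.eigenvectorUnitary.2
  have hU2 : star (hA.eigenvectorUnitary : Matrix (Fin N) (Fin N) ℝ)
      * (hA.eigenvectorUnitary : Matrix (Fin N) (Fin N) ℝ) = 1 :=
    (Matrix.mem_unitaryGroup_iff').mp hA.eigenvectorUnitary.2
  conv_lhs => rw [hA.spectral_theorem]
  exact (aux_conj_pow _ _ _ hU1 hU2 n).symm

lemma aux_pow_entry_le {N : ℕ} (h : Matrix (Fin N) (Fin N) ℝ)
    (hA : h.IsHermitian) (hmax : ℝ) (hmaxnn : 0 ≤ hmax)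
    (hspec : ∀ μ ∈ spectrum ℝ h, |μ| ≤ hmax) (n : ℕ) (a b : Fin N) :
    (h ^ n) a b ≤ hmax ^ n := by
  set U : Matrix (Fin N) (Fin N) ℝ := (hA.eigenvectorUnitary : Matrix (Fin N) (Fin N) ℝ) with hU
  have hrow : ∀ a : Fin N, ∑ k, (U a k) ^ 2 = 1 := by
    intro a
    have h1 : (U * star U) a a = 1 := by
      rw [(Matrix.mem_unitaryGroup_iff).mp hA.eigenvectorUnitary.2, Matrix.one_apply_eq]
    rw [Matrix.mul_apply] at h1
    simpa [Matrix.star_apply, sq] using h1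
  have heig : ∀ k, |hA.eigenvalues k| ≤ hmax := fun k =>
    hspec _ (hA.eigenvalues_mem_spectrum_real k)
  have key := aux_pow_spectral h hA n
  rw [Matrix.diagonal_pow] at key
  have hentry : (h ^ n) a b = ∑ k, U a k * (hA.eigenvalues k ^ n) * U b k := by
    rw [key]
    rw [Matrix.mul_apply]
    congr 1
    ext k
    rw [Matrix.mul_diagonal, Matrix.star_apply, star_trivial]
    simp [hU, Pi.pow_apply, Function.comp]
  rw [hentry]
  have hCS : ∑ k, |U a k| * |U b k| ≤ 1 := by
    have h2 := Finset.sum_mul_sq_le_sq_mul_sq Finset.univ (fun k => |U a k|) (fun k => |U b k|)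
    simp only [sq_abs] at h2
    rw [hrow a, hrow b, one_mul] at h2
    have hnn : 0 ≤ ∑ k, |U a k| * |U b k| :=
      Finset.sum_nonneg fun k _ => mul_nonneg (abs_nonneg _) (abs_nonneg _)
    nlinarith
  calc ∑ k, U a k * (hA.eigenvalues k ^ n) * U b k
      ≤ ∑ k, |U a k| * hmax ^ n * |U b k| := by
        refine Finset.sum_le_sum fun k _ => ?_
        calc U a k * (hA.eigenvalues k ^ n) * U b k
            ≤ |U a k * (hA.eigenvalues k ^ n) * U b k| := le_abs_self _
          _ = |U a k| * |hA.eigenvalues k| ^ n * |U b k| := by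
              rw [abs_mul, abs_mul, abs_pow]
          _ ≤ |U a k| * hmax ^ n * |U b k| := by
              exact mul_le_mul_of_nonneg_right (mul_le_mul_of_nonneg_left
                (pow_le_pow_left₀ (abs_nonneg _) (heig k) n) (abs_nonneg _)) (abs_nonneg _)
    _ = hmax ^ n * ∑ k, |U a k| * |U b k| := by
        rw [Finset.mul_sum]; congr 1; ext k; ring
    _ ≤ hmax ^ n * 1 := by
        exact mul_le_mul_of_nonneg_left hCS (pow_nonneg hmaxnn n)
    _ = hmax ^ n := mul_one _

theorem stmt_4 {N : ℕ} (h : Matrix (Fin N) (Fin N) ℝ)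
    (hpos : ∀ i j, 0 ≤ h i j) (hsymm : h.IsSymm)
    (i j : Fin N) (d : ℕ) (hd : 1 ≤ d)
    (hzero : ∀ n < d, (h ^ n) i j = 0)
    (hmax : ℝ) (hmaxpos : 0 < hmax)
    (hspec : ∀ μ ∈ spectrum ℝ h, |μ| ≤ hmax)
    (α t : ℝ) (hα : 1 < α) (ht : 0 ≤ t) :
    NormedSpace.exp (t • h) i j ≤ (Real.exp (α * hmax * t) - 1) * α⁻¹ ^ d := by
  have hA : h.IsHermitian := by
    rw [Matrix.IsHermitian, Matrix.conjTranspose]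
    ext a b; simpa using congrFun (congrFun hsymm a) b
  set x : ℝ := α * hmax * t with hx
  have hxnn : 0 ≤ x := by positivity
  set c : ℝ := α⁻¹ ^ d with hc
  have hcnn : 0 ≤ c := by positivity
  -- the entrywise series
  set F : ℕ → Matrix (Fin N) (Fin N) ℝ := fun n => ((n ! : ℝ))⁻¹ • (t • h) ^ n with hF
  set G : ℕ → ℝ := fun n => if n = 0 then 0 else x ^ n / n ! * c with hG
  have hFentry : ∀ n a b, F n a b = ((n ! : ℝ))⁻¹ * t ^ n * (h ^ n) a b := by
    intro n a b
    simp [hF, smul_pow, Matrix.smul_apply, smul_eq_mul, mul_assoc]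
  have hFnn : ∀ n a b, 0 ≤ F n a b := by
    intro n a b
    rw [hFentry]
    have := aux_pow_entry_nonneg h hpos n a b
    positivity
  have hFbound : ∀ n a b, F n a b ≤ ((n ! : ℝ))⁻¹ * (hmax * t) ^ n := by
    intro n a b
    rw [hFentry]
    have hb := aux_pow_entry_le h hA hmax hmaxpos.le hspec n a b
    rw [mul_pow]
    rw [mul_assoc]
    refine mul_le_mul_of_nonneg_left ?_ (by positivity)
    rw [mul_comm]
    exact mul_le_mul_of_nonneg_right hb (by positivity)
  -- summability
  have hGsum : Summable G := by
    apply Summable.of_nonneg_of_le (fun n => ?_) (fun n => ?_)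
      (((Real.summable_pow_div_factorial x).mul_right c))
    · simp only [hG]; split
      · exact le_rfl
      · positivity
    · simp only [hG]; split
      · positivity
      · exact le_rfl
  have hFGle : ∀ n, F n i j ≤ G n := by
    intro n
    by_cases hn : n < d
    · have hz : (h ^ n) i j = 0 := hzero n hn
      rw [hFentry, hz, mul_zero]
      simp only [hG]; split
      · exact le_rfl
      · positivity
    · push_neg at hn
      have hn0 : n ≠ 0 := by omega
      have : ((n ! : ℝ))⁻¹ * (hmax * t) ^ n ≤ x ^ n / n ! * c := by
        have hα0 : α ≠ 0 := by positivity
        have hht : (hmax * t) ^ n = x ^ n * α⁻¹ ^ n := by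
          rw [← mul_pow]
          congr 1
          rw [hx]
          field_simp
        have h1 : α⁻¹ ^ n ≤ c := by
          rw [hc]
          exact pow_le_pow_of_le_one (by positivity)
            (by rw [inv_le_one_iff₀]; right; exact hα.le) hn
        have hfac : (0:ℝ) ≤ ((n ! : ℝ))⁻¹ := by positivity
        have hxn : (0:ℝ) ≤ x ^ n := by positivity
        calc ((n ! : ℝ))⁻¹ * (hmax * t) ^ n = ((n ! : ℝ))⁻¹ * (x ^ n * α⁻¹ ^ n) := by rw [hht]
          _ ≤ ((n ! : ℝ))⁻¹ * (x ^ n * c) := by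
              exact mul_le_mul_of_nonneg_left
                (mul_le_mul_of_nonneg_left h1 hxn) hfac
          _ = x ^ n / n ! * c := by ring
      calc F n i j ≤ ((n ! : ℝ))⁻¹ * (hmax * t) ^ n := hFbound n i j
        _ ≤ x ^ n / n ! * c := this
        _ = G n := by simp [hG, hn0]
  have hFsum : ∀ a b, Summable fun n => F n a b := by
    intro a b
    apply Summable.of_nonneg_of_le (fun n => hFnn n a b) (fun n => hFbound n a b)
    simpa [div_eq_inv_mul] using Real.summable_pow_div_factorial (hmax * t)
  -- exp entry as tsum
  have hFsumM : Summable F := by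
    refine Pi.summable.mpr ?_
    intro a
    rw [Pi.summable]
    intro b
    exact hFsum a b
  have hexp : NormedSpace.exp (t • h) i j = ∑' n, F n i j := by
    have h1 : HasSum F (NormedSpace.exp (t • h)) := by
      rw [NormedSpace.exp_eq_tsum ℝ]
      exact hFsumM.hasSum
    have h2 : HasSum (fun n => F n i j) (NormedSpace.exp (t • h) i j) := by
      exact (Pi.hasSum.mp ((Pi.hasSum.mp h1) i)) j
    exact h2.tsum_eq.symm
  rw [hexp]
  have hstep : ∑' n, F n i j ≤ ∑' n, G n :=
    Summable.tsum_le_tsum hFGle (hFsum i j) hGsum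
  refine hstep.trans ?_
  -- compute tsum G
  have hexpx : Real.exp x = ∑' n : ℕ, x ^ n / n ! := by
    rw [Real.exp_eq_exp_ℝ, NormedSpace.exp_eq_tsum_div]
  have hsum2 : Summable (fun n : ℕ => x ^ n / n !) := Real.summable_pow_div_factorial x
  have hGt : ∑' n, G n = (Real.exp x - 1) * c := by
    have h0 : Real.exp x = 1 + ∑' n : ℕ, x ^ (n + 1) / (n + 1)! := by
      rw [hexpx, Summable.tsum_eq_zero_add hsum2]
      simp
    have hG0 : ∑' n, G n = (∑' n : ℕ, x ^ (n + 1) / (n + 1)!) * c := by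
      rw [Summable.tsum_eq_zero_add hGsum]
      simp only [hG, Nat.succ_ne_zero, if_false, if_true, eq_self_iff_true, zero_add]
      rw [tsum_mul_right]
    rw [hG0]
    have : ∑' n : ℕ, x ^ (n + 1) / (n + 1)! = Real.exp x - 1 := by linarith
    rw [this]
  rw [hGt]
end

section
/- Let h be an N×N real symmetric matrix with nonnegative entries and zero diagonal, and define h̃ by h̃_{ij} = h_{ij} for i ≠ j and h̃_{ii} = Σ_k h_{ik}. Then the largest eigenvalue of h̃ is at least twice the largest eigenvalue of h. -/
open Matrix Pointwise

lemma rayleigh_le_aux {N : ℕ} [NeZero N] {A : Matrix (Fin N) (Fin N) ℝ}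
    (hA : A.IsHermitian) (x : Fin N → ℝ) :
    x ⬝ᵥ (A *ᵥ x) ≤ sSup (spectrum ℝ A) * (x ⬝ᵥ x) := by
  set μ := sSup (spectrum ℝ A) with hμ
  have hfin : (spectrum ℝ A).Finite := Matrix.finite_real_spectrum
  have hbdd : BddAbove (spectrum ℝ A) := hfin.bddAbove
  set M : Matrix (Fin N) (Fin N) ℝ := algebraMap ℝ _ μ - A with hM
  have hMH : M.IsHermitian := by
    have h1 : (algebraMap ℝ (Matrix (Fin N) (Fin N) ℝ) μ).IsHermitian := by
      rw [Matrix.algebraMap_eq_diagonal]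
      exact Matrix.isHermitian_diagonal _
    exact h1.sub hA
  have hspecM : spectrum ℝ M = {μ} - spectrum ℝ A := (spectrum.singleton_sub_eq A μ).symm
  have hev : ∀ i, 0 ≤ hMH.eigenvalues i := by
    intro i
    have hmem := hMH.eigenvalues_mem_spectrum_real i
    rw [hspecM] at hmem
    obtain ⟨a, ha, b, hb, hab⟩ := hmem
    rw [Set.mem_singleton_iff] at ha
    subst ha
    have hbμ : b ≤ μ := le_csSup hbdd hb
    rw [← hab]
    show (0:ℝ) ≤ μ - b
    linarith
  have hpsd : M.PosSemidef := hMH.posSemidef_iff_eigenvalues_nonneg.mpr (fun i => hev i)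
  have h0 := hpsd.re_dotProduct_nonneg x
  simp only [RCLike.re_to_real, star_trivial] at h0
  have hMv : M *ᵥ x = μ • x - A *ᵥ x := by
    rw [hM, Matrix.sub_mulVec, Algebra.algebraMap_eq_smul_one, Matrix.smul_mulVec,
      Matrix.one_mulVec]
  rw [hMv, dotProduct_sub, dotProduct_smul] at h0
  simp only [smul_eq_mul] at h0
  linarith

theorem stmt_5 {N : ℕ} (hN : 0 < N) (h : Matrix (Fin N) (Fin N) ℝ)
    (hsymm : h.IsSymm) (hpos : ∀ i j, 0 ≤ h i j) (hdiag : ∀ i, h i i = 0) :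
    2 * sSup (spectrum ℝ h) ≤
      sSup (spectrum ℝ
        (Matrix.of (fun i j => if i = j then ∑ k, h i k else h i j) :
          Matrix (Fin N) (Fin N) ℝ)) := by
  haveI : NeZero N := ⟨hN.ne'⟩
  haveI : Nonempty (Fin N) := Fin.pos_iff_nonempty.mp hN
  have hsymm' : ∀ i j, h j i = h i j := fun i j => by
    conv_lhs => rw [← hsymm]
    rfl
  have hh : h.IsHermitian := by
    ext i j
    simp [Matrix.conjTranspose_apply, hsymm' i j]
  set g : Matrix (Fin N) (Fin N) ℝ :=
    Matrix.of (fun i j => if i = j then ∑ k, h i k else h i j) with hg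
  have hgsymm : ∀ i j, g j i = g i j := by
    intro i j
    by_cases hij : i = j
    · subst hij; rfl
    · simp [hg, hij, Ne.symm hij, hsymm' i j]
  have hgH : g.IsHermitian := by
    ext i j
    simp [Matrix.conjTranspose_apply, hgsymm i j]
  have hfin : (spectrum ℝ h).Finite := Matrix.finite_real_spectrum
  have hne : (spectrum ℝ h).Nonempty := by
    rw [hh.spectrum_real_eq_range_eigenvalues]
    exact Set.range_nonempty _
  have hmem : sSup (spectrum ℝ h) ∈ spectrum ℝ h := hne.csSup_mem hfin
  set μ := sSup (spectrum ℝ h) with hμ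
  rw [hh.spectrum_real_eq_range_eigenvalues] at hmem
  obtain ⟨i, hi⟩ := hmem
  set v : Fin N → ℝ := ⇑(hh.eigenvectorBasis i) with hv
  have hvec : h *ᵥ v = μ • v := by rw [hv, hh.mulVec_eigenvectorBasis, hi]
  have hnorm : ∑ k, v k * v k = 1 := by
    have h1 : ‖hh.eigenvectorBasis i‖ = 1 := hh.eigenvectorBasis.orthonormal.1 i
    have h2 : (inner ℝ (hh.eigenvectorBasis i) (hh.eigenvectorBasis i) : ℝ) = 1 := by
      rw [real_inner_self_eq_norm_sq, h1]; norm_num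
    rw [PiLp.inner_apply] at h2
    simpa [hv, ← sq] using h2
  set w : Fin N → ℝ := fun k => |v k| with hw
  have hww : ∑ k, w k * w k = 1 := by
    simp only [hw, abs_mul_abs_self]
    exact hnorm
  have hS2swap : ∑ a, ∑ b, h a b * w a ^ 2 = ∑ a, ∑ b, h a b * w b ^ 2 := by
    rw [Finset.sum_comm]
    exact Finset.sum_congr rfl fun a _ => Finset.sum_congr rfl fun b _ => by rw [hsymm' b a]
  have hS1S2 : ∑ a, ∑ b, h a b * (w a * w b) ≤ ∑ a, ∑ b, h a b * w a ^ 2 := by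
    have key : ∀ a b : Fin N, h a b * (2 * (w a * w b)) ≤ h a b * (w a ^ 2 + w b ^ 2) := by
      intro a b
      apply mul_le_mul_of_nonneg_left _ (hpos a b)
      nlinarith [sq_nonneg (w a - w b)]
    have hsum : ∑ a, ∑ b, h a b * (2 * (w a * w b)) ≤
        ∑ a, ∑ b, h a b * (w a ^ 2 + w b ^ 2) :=
      Finset.sum_le_sum fun a _ => Finset.sum_le_sum fun b _ => key a b
    have e1 : ∑ a, ∑ b, h a b * (2 * (w a * w b)) =
        2 * ∑ a, ∑ b, h a b * (w a * w b) := by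
      rw [Finset.mul_sum]
      exact Finset.sum_congr rfl fun a _ => by
        rw [Finset.mul_sum]
        exact Finset.sum_congr rfl fun b _ => by ring
    have e2 : ∑ a, ∑ b, h a b * (w a ^ 2 + w b ^ 2) =
        (∑ a, ∑ b, h a b * w a ^ 2) + ∑ a, ∑ b, h a b * w b ^ 2 := by
      rw [← Finset.sum_add_distrib]
      exact Finset.sum_congr rfl fun a _ => by
        rw [← Finset.sum_add_distrib]
        exact Finset.sum_congr rfl fun b _ => by ring
    rw [e1, e2, ← hS2swap] at hsum
    linarith
  have hgw : w ⬝ᵥ (g *ᵥ w) =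
      (∑ a, ∑ b, h a b * (w a * w b)) + ∑ a, ∑ b, h a b * w a ^ 2 := by
    rw [← Finset.sum_add_distrib]
    unfold dotProduct
    refine Finset.sum_congr rfl fun a _ => ?_
    have expand : w a * (g *ᵥ w) a = ∑ b, w a * (g a b * w b) := by
      rw [Matrix.mulVec, dotProduct, Finset.mul_sum]
    have split : ∀ b, w a * (g a b * w b) =
        h a b * (w a * w b) + (if a = b then (∑ k, h a k) * w a ^ 2 else 0) := by
      intro b
      by_cases hab : a = b
      · subst hab
        simp only [hg, Matrix.of_apply, eq_self_iff_true, if_true, hdiag a]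
        ring
      · simp only [hg, Matrix.of_apply, if_neg hab]
        ring
    rw [expand, Finset.sum_congr rfl fun b _ => split b, Finset.sum_add_distrib]
    congr 1
    rw [Finset.sum_ite_eq, if_pos (Finset.mem_univ a), Finset.sum_mul]
  have hvhv : v ⬝ᵥ (h *ᵥ v) = μ := by
    rw [hvec]
    simp only [dotProduct, Pi.smul_apply, smul_eq_mul]
    rw [show ∑ k, v k * (μ * v k) = μ * ∑ k, v k * v k by
      rw [Finset.mul_sum]; exact Finset.sum_congr rfl fun k _ => by ring]
    rw [hnorm, mul_one]
  have hcomp : v ⬝ᵥ (h *ᵥ v) ≤ ∑ a, ∑ b, h a b * (w a * w b) := by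
    unfold dotProduct Matrix.mulVec dotProduct
    refine Finset.sum_le_sum fun a _ => ?_
    rw [Finset.mul_sum]
    refine Finset.sum_le_sum fun b _ => ?_
    have : v a * v b ≤ w a * w b := by
      rw [hw]
      calc v a * v b ≤ |v a * v b| := le_abs_self _
        _ = |v a| * |v b| := abs_mul _ _
    nlinarith [hpos a b]
  have hray := rayleigh_le_aux hgH w
  have hwdot : w ⬝ᵥ w = 1 := hww
  rw [hwdot, mul_one] at hray
  have : 2 * μ ≤ w ⬝ᵥ (g *ᵥ w) := by
    rw [hgw]
    have := hvhv ▸ hcomp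
    linarith
  linarith
end
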